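/- Let G be a finite group belonging to the class Ψ. Then the metric dimension of the power graph P_G is β(P_G) = |G| − |U(P_G)| + 1, where |U(P_G)| is the number of twin classes of P_G. -/

import Mathlib

open SimpleGraph

/-- `W` is a resolving set for the graph `Γ`: any two distinct vertices are
distinguished by their distance to some element of `W`. -/
def IsResolvingSet {V : Type*} (Γ : SimpleGraph V) (W : Set V) : Prop :=
  ∀ u v : V, u ≠ v → ∃ w ∈ W, Γ.dist u w ≠ Γ.dist v w

/-- The metric dimension of a graph: the least cardinality of a resolving set. -/
noncomputable def metricDim {V : Type*} (Γ : SimpleGraph V) : ℕ :=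
  sInf {n | ∃ W : Set V, W.Finite ∧ W.ncard = n ∧ IsResolvingSet Γ W}

/-- A minimal resolving set: a resolving set no proper subset of which resolves. -/
def IsMinimalResolvingSet {V : Type*} (Γ : SimpleGraph V) (W : Set V) : Prop :=
  IsResolvingSet Γ W ∧ ∀ W' : Set V, W' ⊂ W → ¬ IsResolvingSet Γ W'

/-- Two vertices are twins if they have the same open neighborhood or the same
closed neighborhood. -/
def AreTwins {V : Type*} (Γ : SimpleGraph V) (u v : V) : Prop :=
  Γ.neighborSet u = Γ.neighborSet v ∨
    insert u (Γ.neighborSet u) = insert v (Γ.neighborSet v)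

/-- The twin class of a vertex. -/
def twinClass {V : Type*} (Γ : SimpleGraph V) (u : V) : Set V :=
  {v | AreTwins Γ u v}

/-- The number of twin classes of a graph. -/
noncomputable def twinClassCount {V : Type*} (Γ : SimpleGraph V) : ℕ :=
  {S : Set V | ∃ u : V, S = twinClass Γ u}.ncard

/-- Resolving sets of `Γ` have the exchange property. -/
def HasExchangeProperty {V : Type*} (Γ : SimpleGraph V) : Prop :=
  ∀ W₁ W₂ : Set V, IsMinimalResolvingSet Γ W₁ → IsMinimalResolvingSet Γ W₂ →
    ∀ u ∈ W₁, ∃ v ∈ W₂, IsMinimalResolvingSet Γ ((W₁ \ {u}) ∪ {v})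

/-- The (undirected) power graph of a group `G`: distinct `x`, `y` are adjacent
iff one is a positive power of the other. -/
def powerGraph (G : Type*) [Group G] : SimpleGraph G :=
  SimpleGraph.fromRel (fun x y => ∃ m : ℕ, 0 < m ∧ y = x ^ m)

/-- `R{x,y}`: the set of vertices having different distances to `x` and `y`. -/
def Rset {V : Type*} (Γ : SimpleGraph V) (x y : V) : Set V :=
  {z | Γ.dist x z ≠ Γ.dist y z}

/-- The class `Ψ`: noncyclic groups with an odd prime `p` such that (C1) the
prime divisors of `|G|` are exactly `2` and `p`; (C2) the subgroup of order `p`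
is unique; (C3) there is no element of order `4`; (C4) each involution lies in
a cyclic subgroup of order `2p`. -/
def InPsi (G : Type*) [Group G] [Fintype G] : Prop :=
  ¬ IsCyclic G ∧
    ∃ p : ℕ, p.Prime ∧ Odd p ∧
      (∀ q : ℕ, q.Prime → (q ∣ Fintype.card G ↔ q = 2 ∨ q = p)) ∧
      (∃! H : Subgroup G, Nat.card H = p) ∧
      (∀ x : G, orderOf x ≠ 4) ∧
      (∀ x : G, orderOf x = 2 →
        ∃ H : Subgroup G, IsCyclic H ∧ Nat.card H = 2 * p ∧ x ∈ H)

open Subgroup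

namespace PsiAux

variable {V : Type*}

lemma twins_refl (Γ : SimpleGraph V) (u : V) : AreTwins Γ u u := Or.inl rfl

lemma twins_symm {Γ : SimpleGraph V} {u v : V} (h : AreTwins Γ u v) : AreTwins Γ v u :=
  h.imp Eq.symm Eq.symm

lemma twins_adj_iff {Γ : SimpleGraph V} {u v w : V} (h : AreTwins Γ u v)
    (hwu : w ≠ u) (hwv : w ≠ v) : Γ.Adj u w ↔ Γ.Adj v w := by
  rcases h with h | h
  · constructor
    · intro ha; have : w ∈ Γ.neighborSet u := ha; rw [h] at this; exact this
    · intro ha; have : w ∈ Γ.neighborSet v := ha; rw [← h] at this; exact this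
  · constructor
    · intro ha
      have : w ∈ insert u (Γ.neighborSet u) := Set.mem_insert_of_mem _ ha
      rw [h] at this
      rcases this with h' | h'
      · exact absurd h' hwv
      · exact h'
    · intro ha
      have : w ∈ insert v (Γ.neighborSet v) := Set.mem_insert_of_mem _ ha
      rw [← h] at this
      rcases this with h' | h'
      · exact absurd h' hwu
      · exact h'

lemma twins_trans {Γ : SimpleGraph V} {u v s : V} (h1 : AreTwins Γ u v)
    (h2 : AreTwins Γ v s) : AreTwins Γ u s := by
  by_cases huv : u = v
  · subst huv; exact h2
  by_cases hvs : v = s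
  · subst hvs; exact h1
  by_cases hus : u = s
  · subst hus; exact twins_refl Γ u
  -- now all distinct
  have key : ∀ w, w ≠ u → w ≠ s → (Γ.Adj u w ↔ Γ.Adj s w) := by
    intro w hwu hws
    by_cases hwv : w = v
    · subst hwv
      have e1 := twins_adj_iff h2 (w := u) huv hus
      have e2 := twins_adj_iff h1 (w := s) (fun h => hus h.symm) (fun h => hvs h.symm)
      constructor
      · intro ha; exact (e2.mp (e1.mp ha.symm).symm).symm
      · intro ha; exact (e1.mpr (e2.mpr ha.symm).symm).symm
    · calc Γ.Adj u w ↔ Γ.Adj v w := twins_adj_iff h1 hwu hwv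
        _ ↔ Γ.Adj s w := twins_adj_iff h2 hwv hws
  by_cases hadj : Γ.Adj u s
  · right
    ext w
    simp only [Set.mem_insert_iff, mem_neighborSet]
    constructor
    · rintro (rfl | ha)
      · exact Or.inr hadj.symm
      · by_cases hws : w = s
        · exact Or.inl hws
        · by_cases hwu : w = u
          · subst hwu; exact absurd ha (Γ.irrefl)
          · exact Or.inr ((key w hwu hws).mp ha)
    · rintro (rfl | ha)
      · exact Or.inr hadj
      · by_cases hwu : w = u
        · exact Or.inl hwu
        · by_cases hws : w = s
          · subst hws; exact absurd ha (Γ.irrefl)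
          · exact Or.inr ((key w hwu hws).mpr ha)
  · -- not adjacent: show open twins
    left
    ext w
    simp only [mem_neighborSet]
    by_cases hwu : w = u
    · subst hwu
      constructor
      · intro h; exact absurd h (Γ.irrefl)
      · intro h; exact absurd h.symm hadj
    · by_cases hws : w = s
      · subst hws
        constructor
        · intro h; exact absurd h hadj
        · intro h; exact absurd h (Γ.irrefl)
      · constructor
        · intro h; exact (key w hwu hws).mp h
        · intro h; exact (key w hwu hws).mpr h

lemma twinClass_eq {Γ : SimpleGraph V} {u v : V} (h : AreTwins Γ u v) :
    twinClass Γ u = twinClass Γ v := by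
  ext w
  exact ⟨fun hw => twins_trans (twins_symm h) hw, fun hw => twins_trans h hw⟩

lemma mem_twinClass_self (Γ : SimpleGraph V) (u : V) : u ∈ twinClass Γ u :=
  twins_refl Γ u

lemma exists_splitter {Γ : SimpleGraph V} {u v : V} (hne : u ≠ v)
    (hnt : ¬ AreTwins Γ u v) :
    ∃ w, w ≠ u ∧ w ≠ v ∧ ¬ (Γ.Adj w u ↔ Γ.Adj w v) := by
  by_contra h
  push_neg at h
  have key : ∀ w, w ≠ u → w ≠ v → (Γ.Adj w u ↔ Γ.Adj w v) := fun w h1 h2 => h w h1 h2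
  apply hnt
  by_cases hadj : Γ.Adj u v
  · right
    ext w
    simp only [Set.mem_insert_iff, mem_neighborSet]
    constructor
    · rintro (rfl | ha)
      · exact Or.inr hadj.symm
      · by_cases hwv : w = v
        · exact Or.inl hwv
        · by_cases hwu : w = u
          · subst hwu; exact absurd ha (Γ.irrefl)
          · exact Or.inr ((key w hwu hwv).mp ha.symm).symm
    · rintro (rfl | ha)
      · exact Or.inr hadj
      · by_cases hwu : w = u
        · exact Or.inl hwu
        · by_cases hwv : w = v
          · subst hwv; exact absurd ha (Γ.irrefl)
          · exact Or.inr ((key w hwu hwv).mpr ha.symm).symm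
  · left
    ext w
    simp only [mem_neighborSet]
    by_cases hwu : w = u
    · subst hwu
      exact ⟨fun h' => absurd h' (Γ.irrefl), fun h' => absurd h'.symm hadj⟩
    · by_cases hwv : w = v
      · subst hwv
        exact ⟨fun h' => absurd h' hadj, fun h' => absurd h' (Γ.irrefl)⟩
      · exact ⟨fun h' => ((key w hwu hwv).mp h'.symm).symm,
          fun h' => ((key w hwu hwv).mpr h'.symm).symm⟩


section PowerGraphBasics

variable {G : Type*} [Group G] [Fintype G]
set_option linter.unusedSectionVars false
set_option linter.unusedVariables false

lemma mem_zpowers_iff_pow {x y : G} : y ∈ zpowers x ↔ ∃ m : ℕ, 0 < m ∧ y = x ^ m := by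
  constructor
  · intro h
    obtain ⟨n, hn⟩ := (mem_powers_iff_mem_zpowers (x := x) (y := y)).mpr h
    rcases Nat.eq_zero_or_pos n with rfl | hpos
    · exact ⟨orderOf x, orderOf_pos x, by simp [← hn, pow_orderOf_eq_one]⟩
    · exact ⟨n, hpos, hn.symm⟩
  · rintro ⟨m, _, rfl⟩
    exact pow_mem (mem_zpowers x) m

lemma pg_adj_iff {x y : G} :
    (powerGraph G).Adj x y ↔ x ≠ y ∧ (x ∈ zpowers y ∨ y ∈ zpowers x) := by
  show (SimpleGraph.fromRel _).Adj x y ↔ _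
  rw [SimpleGraph.fromRel_adj]
  constructor
  · rintro ⟨h1, h2⟩
    refine ⟨h1, ?_⟩
    rcases h2 with h | h
    · exact Or.inr (mem_zpowers_iff_pow.mpr h)
    · exact Or.inl (mem_zpowers_iff_pow.mpr h)
  · rintro ⟨h1, h2⟩
    refine ⟨h1, ?_⟩
    rcases h2 with h | h
    · exact Or.inr (mem_zpowers_iff_pow.mp h)
    · exact Or.inl (mem_zpowers_iff_pow.mp h)

lemma pg_adj_one {x : G} (hx : x ≠ 1) : (powerGraph G).Adj x 1 :=
  pg_adj_iff.mpr ⟨hx, Or.inr (one_mem _)⟩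

lemma pg_reachable (x y : G) : (powerGraph G).Reachable x y := by
  by_cases hxy : x = y
  · exact hxy ▸ SimpleGraph.Reachable.refl x
  by_cases hx : x = 1
  · subst hx
    exact (pg_adj_one (Ne.symm hxy)).symm.reachable
  by_cases hy : y = 1
  · subst hy
    exact (pg_adj_one hx).reachable
  · exact (pg_adj_one hx).reachable.trans (pg_adj_one hy).symm.reachable

lemma pg_dist_ne_zero {x y : G} (h : x ≠ y) : (powerGraph G).dist x y ≠ 0 := by
  intro h0
  exact h ((pg_reachable x y).dist_eq_zero_iff.mp h0)

lemma pg_dist_eq_one {x y : G} (h : (powerGraph G).Adj x y) : (powerGraph G).dist x y = 1 :=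
  SimpleGraph.dist_eq_one_iff_adj.mpr h

lemma pg_dist_eq_two {x y : G} (hne : x ≠ y) (hnadj : ¬ (powerGraph G).Adj x y) :
    (powerGraph G).dist x y = 2 := by
  have hx : x ≠ 1 := by
    rintro rfl
    exact hnadj ((pg_adj_one (Ne.symm hne)).symm)
  have hy : y ≠ 1 := by
    rintro rfl
    exact hnadj (pg_adj_one hne)
  have hle : (powerGraph G).dist x y ≤ 2 := by
    refine le_trans (SimpleGraph.dist_le
      (SimpleGraph.Walk.cons (pg_adj_one hx) (pg_adj_one hy).symm.toWalk)) ?_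
    simp
  have h0 := pg_dist_ne_zero hne
  have h1 : (powerGraph G).dist x y ≠ 1 := by
    rw [Ne, SimpleGraph.dist_eq_one_iff_adj]
    exact hnadj
  omega

lemma pg_dist_ne {x y w : G} (hwx : w ≠ x) (hwy : w ≠ y)
    (h1 : (powerGraph G).Adj w x) (h2 : ¬ (powerGraph G).Adj w y) :
    (powerGraph G).dist x w ≠ (powerGraph G).dist y w := by
  rw [pg_dist_eq_one h1.symm, pg_dist_eq_two (Ne.symm hwy) (fun h => h2 h.symm)]
  omega

lemma pg_dist_eq_of_twins {x y w : G} (h : AreTwins (powerGraph G) x y)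
    (hwx : w ≠ x) (hwy : w ≠ y) :
    (powerGraph G).dist x w = (powerGraph G).dist y w := by
  have hiff := PsiAux.twins_adj_iff h hwx hwy
  by_cases hadj : (powerGraph G).Adj x w
  · rw [pg_dist_eq_one hadj, pg_dist_eq_one (hiff.mp hadj)]
  · rw [pg_dist_eq_two (Ne.symm hwx) hadj,
      pg_dist_eq_two (Ne.symm hwy) (fun h' => hadj (hiff.mpr h'))]

end PowerGraphBasics

section PsiCtxSec
set_option linter.unusedSectionVars false
set_option linter.unusedVariables false

variable {G : Type*} [Group G] [Fintype G]

structure PsiCtx (G : Type*) [Group G] [Fintype G] where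
  p : ℕ
  hp : p.Prime
  hodd : Odd p
  hnc : ¬ IsCyclic G
  hdvd : ∀ q : ℕ, q.Prime → (q ∣ Fintype.card G ↔ q = 2 ∨ q = p)
  z : G
  hz : orderOf z = p
  huniq : ∀ g : G, orderOf g = p → zpowers g = zpowers z
  hno4 : ∀ x : G, orderOf x ≠ 4
  hinv : ∀ x : G, orderOf x = 2 →
    ∃ H : Subgroup G, IsCyclic H ∧ Nat.card H = 2 * p ∧ x ∈ H

namespace PsiCtx

variable (C : PsiCtx G)
include C

lemma p2 : C.p ≠ 2 := by
  intro h
  have := C.hodd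
  rw [h] at this
  norm_num [Nat.odd_iff] at this

lemma p3 : 3 ≤ C.p := by
  have h2 := C.hp.two_le
  have := C.p2
  omega

lemma prime_of_dvd {g : G} {q : ℕ} (hq : q.Prime) (h : q ∣ orderOf g) :
    q = 2 ∨ q = C.p :=
  (C.hdvd q hq).mp (h.trans orderOf_dvd_card)

lemma not_four_dvd (g : G) : ¬ (4 ∣ orderOf g) := by
  intro h
  apply C.hno4 (g ^ (orderOf g / 4))
  rw [orderOf_pow, Nat.gcd_eq_right (Nat.div_dvd_of_dvd h),
    Nat.div_div_self h (orderOf_pos g).ne']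

lemma ord_shape (g : G) : ∃ β : ℕ, orderOf g = C.p ^ β ∨ orderOf g = 2 * C.p ^ β := by
  have hn0 : orderOf g ≠ 0 := (orderOf_pos g).ne'
  obtain ⟨β, m, hpm, hnm⟩ : ∃ β m, ¬ C.p ∣ m ∧ orderOf g = C.p ^ β * m :=
    ⟨(orderOf g).factorization C.p, orderOf g / C.p ^ (orderOf g).factorization C.p,
      Nat.not_dvd_ordCompl C.hp hn0, (Nat.ordProj_mul_ordCompl_eq_self (orderOf g) C.p).symm⟩
  have hm0 : m ≠ 0 := by
    rintro rfl
    rw [mul_zero] at hnm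
    exact hn0 hnm
  have hmdvd : m ∣ orderOf g := ⟨C.p ^ β, by rw [hnm, mul_comm]⟩
  have hm2 : ∀ q : ℕ, q.Prime → q ∣ m → q = 2 := by
    intro q hq hqm
    rcases C.prime_of_dvd hq (hqm.trans hmdvd) with h | h
    · exact h
    · exact absurd (h ▸ hqm) hpm
  obtain hk := Nat.eq_prime_pow_of_unique_prime_dvd (p := 2) hm0 (fun {q} hq hqm => hm2 q hq hqm)
  set k := m.primeFactorsList.length with hkdef
  have hk2 : k ≤ 1 := by
    by_contra hgt
    push_neg at hgt
    have h4 : (4:ℕ) ∣ m := by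
      have : (2:ℕ)^2 ∣ 2^k := pow_dvd_pow 2 hgt
      rw [← hk] at this
      simpa using this
    exact C.not_four_dvd g (h4.trans hmdvd)
  interval_cases k
  · rw [pow_zero] at hk
    exact ⟨β, Or.inl (by rw [hnm, hk, mul_one])⟩
  · rw [pow_one] at hk
    exact ⟨β, Or.inr (by rw [hnm, hk, mul_comm])⟩

lemma ord_of_not_p_dvd {g : G} (h : ¬ C.p ∣ orderOf g) :
    orderOf g = 1 ∨ orderOf g = 2 := by
  obtain ⟨β, hβ | hβ⟩ := C.ord_shape g
  · rcases Nat.eq_zero_or_pos β with rfl | hβ1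
    · rw [pow_zero] at hβ; exact Or.inl hβ
    · exact absurd (hβ ▸ dvd_pow_self C.p hβ1.ne') h
  · rcases Nat.eq_zero_or_pos β with rfl | hβ1
    · rw [pow_zero, mul_one] at hβ; exact Or.inr hβ
    · exact absurd (hβ ▸ Dvd.dvd.mul_left (dvd_pow_self C.p hβ1.ne') 2) h

lemma z_ne_one : C.z ≠ 1 := by
  intro h
  have := C.hz
  rw [h, orderOf_one] at this
  have := C.p3
  omega

lemma z_mem {g : G} (h : C.p ∣ orderOf g) : C.z ∈ zpowers g := by
  have hord : orderOf (g ^ (orderOf g / C.p)) = C.p := by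
    rw [orderOf_pow, Nat.gcd_eq_right (Nat.div_dvd_of_dvd h),
      Nat.div_div_self h (orderOf_pos g).ne']
  have heq := C.huniq _ hord
  have hz : C.z ∈ zpowers (g ^ (orderOf g / C.p)) := heq ▸ mem_zpowers _
  exact zpowers_le.mpr (pow_mem (mem_zpowers g) _) hz

lemma eq_invol {x a b : G} (ha : a ∈ zpowers x) (hb : b ∈ zpowers x)
    (ha2 : orderOf a = 2) (hb2 : orderOf b = 2) : a = b := by
  suffices H : ∀ c : G, c ∈ zpowers x → orderOf c = 2 → c = x ^ (orderOf x / 2) by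
    rw [H a ha ha2, H b hb hb2]
  intro c hc hc2
  obtain ⟨m, hm0⟩ := mem_powers_iff_mem_zpowers.mpr hc
  have hm : x ^ m = c := hm0
  clear hm0
  have h2d : (2:ℕ) ∣ orderOf x := hc2 ▸ orderOf_dvd_of_mem_zpowers hc
  obtain ⟨e, he⟩ := h2d
  have hcc : c ^ 2 = 1 := by rw [← hc2]; exact pow_orderOf_eq_one c
  have hdvd : orderOf x ∣ m * 2 := by
    apply orderOf_dvd_of_pow_eq_one
    rw [pow_mul, hm, hcc]
  obtain ⟨j, hj⟩ := hdvd
  have hem : m = e * j := by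
    have h1 : m * 2 = 2 * e * j := by rw [← he]; exact hj
    have h2 : 2 * m = 2 * (e * j) := by linarith
    exact Nat.eq_of_mul_eq_mul_left (by norm_num) h2
  obtain ⟨t, rfl⟩ : ∃ t, m = e * t := ⟨j, hem⟩
  have hxe2 : (x ^ e) ^ 2 = 1 := by
    rw [← pow_mul, mul_comm, ← he, pow_orderOf_eq_one]
  have hct : c = (x ^ e) ^ t := by rw [← pow_mul]; exact hm.symm
  have ht2 : t % 2 = 0 ∨ t % 2 = 1 := Nat.mod_two_eq_zero_or_one t
  have hdecomp : c = (x ^ e) ^ (t % 2) := by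
    conv_lhs => rw [hct, ← Nat.div_add_mod t 2]
    rw [pow_add, pow_mul, hxe2, one_pow, one_mul]
  rcases ht2 with ht | ht
  · rw [ht, pow_zero] at hdecomp
    rw [hdecomp, orderOf_one] at hc2
    omega
  · rw [ht, pow_one] at hdecomp
    rw [hdecomp, he, Nat.mul_div_cancel_left e (by norm_num)]

lemma mem_invol {t a : G} (ht : orderOf t = 2) (ha : a ∈ zpowers t) (ha1 : a ≠ 1) :
    a = t := by
  have h1 : orderOf a ∣ 2 := ht ▸ orderOf_dvd_of_mem_zpowers ha
  have h2 : orderOf a ≠ 1 := by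
    rw [Ne, orderOf_eq_one_iff]; exact ha1
  have h3 : orderOf a = 2 := by
    rcases (Nat.dvd_prime Nat.prime_two).mp h1 with h | h
    · exact absurd h h2
    · exact h
  exact C.eq_invol ha (mem_zpowers t) h3 ht

lemma exists_invol : ∃ t : G, orderOf t = 2 := by
  haveI : Fact (Nat.Prime 2) := ⟨Nat.prime_two⟩
  exact exists_prime_orderOf_dvd_card 2 ((C.hdvd 2 Nat.prime_two).mpr (Or.inl rfl))

lemma h_of_invol {t : G} (ht : orderOf t = 2) :
    ∃ h : G, orderOf h = 2 * C.p ∧ t ∈ zpowers h ∧ C.z ∈ zpowers h := by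
  obtain ⟨H, hHc, hHcard, htH⟩ := C.hinv t ht
  obtain ⟨h₀, hh₀⟩ := hHc.exists_generator
  have hord : orderOf ((h₀ : G)) = 2 * C.p := by
    have h1 : orderOf ((h₀ : G)) = orderOf h₀ :=
      orderOf_injective H.subtype H.subtype_injective h₀
    have h2 : zpowers h₀ = (⊤ : Subgroup H) := by
      rw [eq_top_iff']; exact hh₀
    have h3 := Nat.card_zpowers h₀
    rw [h2, card_top] at h3
    rw [h1, ← h3, hHcard]
  refine ⟨(h₀ : G), hord, ?_, ?_⟩
  · rw [mem_zpowers_iff]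
    obtain ⟨k, hk⟩ := hh₀ ⟨t, htH⟩
    refine ⟨k, ?_⟩
    have := congrArg (fun a : H => (a : G)) hk
    simpa using this
  · apply C.z_mem
    rw [hord]
    exact dvd_mul_left C.p 2

lemma zpowers_eq_of_mem_of_ord {x h : G} (hm : x ∈ zpowers h)
    (ho : orderOf x = orderOf h) : zpowers x = zpowers h := by
  have hle : zpowers x ≤ zpowers h := zpowers_le.mpr hm
  have h1 : ((zpowers x : Subgroup G) : Set G).ncard = orderOf x := by
    rw [← Nat.card_coe_set_eq]
    exact Nat.card_zpowers x
  have h2 : ((zpowers h : Subgroup G) : Set G).ncard = orderOf h := by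
    rw [← Nat.card_coe_set_eq]
    exact Nat.card_zpowers h
  apply SetLike.ext'
  apply Set.eq_of_subset_of_ncard_le (SetLike.coe_subset_coe.mpr hle) ?_ (Set.toFinite _)
  rw [h1, h2, ho]

end PsiCtx
end PsiCtxSec

section PsiCtxSec2
set_option linter.unusedSectionVars false
set_option linter.unusedVariables false
variable {G : Type*} [Group G] [Fintype G]
namespace PsiCtx
variable (C : PsiCtx G)
include C

lemma two_ne_p : (2:ℕ) ≠ C.p := fun h => C.p2 h.symm

lemma p_coprime_two : Nat.Coprime C.p 2 :=
  (Nat.coprime_primes C.hp Nat.prime_two).mpr C.p2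

lemma not_two_dvd_p_pow (β : ℕ) : ¬ (2:ℕ) ∣ C.p ^ β := by
  intro h
  have h2 := Nat.Prime.dvd_of_dvd_pow Nat.prime_two h
  exact C.two_ne_p ((Nat.prime_dvd_prime_iff_eq Nat.prime_two C.hp).mp h2)

lemma ord_dvd_2p {y : G} (h : orderOf y ∣ 2 * C.p) :
    orderOf y = 1 ∨ orderOf y = 2 ∨ orderOf y = C.p ∨ orderOf y = 2 * C.p := by
  have hp1 : 1 < C.p := C.hp.one_lt
  obtain ⟨β, hβ | hβ⟩ := C.ord_shape y
  · rcases Nat.lt_or_ge β 2 with hβ2 | hβ2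
    · interval_cases β
      · rw [pow_zero] at hβ; exact Or.inl hβ
      · rw [pow_one] at hβ; exact Or.inr (Or.inr (Or.inl hβ))
    · exfalso
      have h1 : C.p ^ 2 ∣ 2 * C.p := (pow_dvd_pow C.p hβ2).trans (hβ ▸ h)
      have h2 : C.p ^ 2 ∣ C.p * 2 := by rwa [mul_comm] at h1
      have h3 : C.p ^ 2 ∣ C.p ^ 1 := by
        rw [pow_one]
        exact (Nat.Coprime.pow_left 2 C.p_coprime_two).dvd_of_dvd_mul_right h2
      have := (Nat.pow_dvd_pow_iff_le_right hp1).mp h3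
      omega
  · rcases Nat.lt_or_ge β 2 with hβ2 | hβ2
    · interval_cases β
      · rw [pow_zero, mul_one] at hβ; exact Or.inr (Or.inl hβ)
      · rw [pow_one] at hβ; exact Or.inr (Or.inr (Or.inr hβ))
    · exfalso
      have h1 : 2 * C.p ^ β ∣ 2 * C.p := hβ ▸ h
      have h2 : C.p ^ β ∣ C.p := (mul_dvd_mul_iff_left (a := (2:ℕ)) (by norm_num)).mp h1
      have h3 : C.p ^ 2 ∣ C.p ^ 1 := by
        rw [pow_one]
        exact (pow_dvd_pow C.p hβ2).trans h2
      have := (Nat.pow_dvd_pow_iff_le_right hp1).mp h3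
      omega

lemma not_all_cmp {x : G} (hx : x ≠ 1) :
    ∃ g : G, ¬ (g ∈ zpowers x ∨ x ∈ zpowers g) := by
  by_contra hall
  push_neg at hall
  have hall' : ∀ g : G, g ∈ zpowers x ∨ x ∈ zpowers g := hall
  have hp1 := C.p3
  obtain ⟨β, hβ | hβ⟩ := C.ord_shape x
  · -- orderOf x = p ^ β, use an involution
    obtain ⟨t, ht⟩ := C.exists_invol
    have hβ1 : 1 ≤ β := by
      rcases Nat.eq_zero_or_pos β with rfl | h
      · rw [pow_zero, orderOf_eq_one_iff] at hβ; exact absurd hβ hx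
      · exact h
    rcases hall' t with h | h
    · have h2 : (2:ℕ) ∣ C.p ^ β := by
        rw [← hβ, ← ht]; exact orderOf_dvd_of_mem_zpowers h
      exact C.not_two_dvd_p_pow β h2
    · have h2 : C.p ^ β ∣ 2 := by
        rw [← hβ, ← ht]; exact orderOf_dvd_of_mem_zpowers h
      have h3 : C.p ∣ 2 := (dvd_pow_self C.p (Nat.one_le_iff_ne_zero.mp hβ1)).trans h2
      have := Nat.le_of_dvd (by norm_num) h3
      omega
  · by_cases hβ0 : β = 0
    · -- orderOf x = 2
      subst hβ0
      rw [pow_zero, mul_one] at hβ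
      rcases hall' C.z with h | h
      · have h2 : C.p ∣ 2 := by
          rw [← hβ, ← C.hz]; exact orderOf_dvd_of_mem_zpowers h
        have := Nat.le_of_dvd (by norm_num) h2
        omega
      · have h2 : (2:ℕ) ∣ C.p := by
          rw [← hβ, ← C.hz]; exact orderOf_dvd_of_mem_zpowers h
        exact C.not_two_dvd_p_pow 1 (by rwa [pow_one])
    · -- orderOf x = 2 * p ^ β with β ≥ 1 : G is cyclic, contradiction
      apply C.hnc
      have hpβ3 : 3 ≤ C.p ^ β :=
        le_trans hp1 (Nat.le_self_pow hβ0 C.p)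
      have hx2 : (2:ℕ) ∣ orderOf x := by rw [hβ]; exact dvd_mul_right 2 _
      have hmem_odd : ∀ g : G, ¬ (2:ℕ) ∣ orderOf g → g ∈ zpowers x := by
        intro g hg
        rcases hall' g with h | h
        · exact h
        · exact absurd (hx2.trans (orderOf_dvd_of_mem_zpowers h)) hg
      have hmem_inv : ∀ s : G, orderOf s = 2 → s ∈ zpowers x := by
        intro s hs
        rcases hall' s with h | h
        · exact h
        · exfalso
          have h2 : orderOf x ∣ 2 := hs ▸ orderOf_dvd_of_mem_zpowers h
          have := Nat.le_of_dvd (by norm_num) h2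
          rw [hβ] at this
          omega
      refine ⟨⟨x, fun g => ?_⟩⟩
      obtain ⟨γ, hγ | hγ⟩ := C.ord_shape g
      · exact hmem_odd g (fun h2 => C.not_two_dvd_p_pow γ (hγ ▸ h2))
      · -- orderOf g = 2 * p ^ γ
        have hg0 : orderOf g ≠ 0 := (orderOf_pos g).ne'
        have hsq : g ^ 2 ∈ zpowers x := by
          apply hmem_odd
          rw [orderOf_pow, hγ]
          intro hcon
          have hgcd : Nat.gcd (2 * C.p ^ γ) 2 = 2 :=
            Nat.gcd_eq_right (dvd_mul_right 2 _)
          rw [hgcd, Nat.mul_div_cancel_left _ (by norm_num)] at hcon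
          exact C.not_two_dvd_p_pow γ hcon
        have hppow : g ^ (C.p ^ γ) ∈ zpowers x := by
          rcases Nat.eq_zero_or_pos γ with rfl | hγpos
          · rw [pow_zero, pow_one]
            apply hmem_inv
            rw [hγ, pow_zero, mul_one]
          · apply hmem_inv
            rw [orderOf_pow, hγ,
              Nat.gcd_eq_right (Dvd.dvd.mul_left dvd_rfl 2),
              Nat.mul_div_cancel _ (pow_pos C.hp.pos γ)]
        -- Bezout
        have hcop : Nat.Coprime 2 (C.p ^ γ) :=
          (Nat.coprime_primes Nat.prime_two C.hp).mpr C.two_ne_p |>.pow_right γ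
        have hcopZ : IsCoprime (((2:ℕ)):ℤ) ((C.p ^ γ : ℕ) : ℤ) :=
          Nat.isCoprime_iff_coprime.mpr hcop
        obtain ⟨a, b, hab⟩ := hcopZ
        have key : ((g ^ 2) ^ a) * ((g ^ (C.p ^ γ)) ^ b) = g := by
          rw [← zpow_natCast g 2, ← zpow_natCast g (C.p ^ γ), ← zpow_mul, ← zpow_mul,
            ← zpow_add]
          have : ((2:ℕ):ℤ) * a + ((C.p ^ γ : ℕ) : ℤ) * b = 1 := by
            push_cast at hab ⊢
            linarith
          rw [this, zpow_one]
        rw [← key]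
        exact mul_mem (zpow_mem hsq a) (zpow_mem hppow b)

end PsiCtx
end PsiCtxSec2

section PsiCtxSec3
set_option linter.unusedSectionVars false
set_option linter.unusedVariables false
variable {G : Type*} [Group G] [Fintype G]

lemma closed_subset_of_eq {x y : G} (hxy : zpowers x = zpowers y) :
    insert x ((powerGraph G).neighborSet x) ⊆ insert y ((powerGraph G).neighborSet y) := by
  intro w hw
  have hyx : y ∈ zpowers x := by rw [hxy]; exact mem_zpowers y
  rcases Set.mem_insert_iff.mp hw with rfl | hadj
  · by_cases hxy' : w = y
    · exact Set.mem_insert_iff.mpr (Or.inl hxy')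
    · refine Set.mem_insert_iff.mpr (Or.inr (pg_adj_iff.mpr ⟨Ne.symm hxy', Or.inl hyx⟩))
  · obtain ⟨hnex, hc⟩ := pg_adj_iff.mp hadj
    by_cases hwy : w = y
    · exact Set.mem_insert_iff.mpr (Or.inl hwy)
    · refine Set.mem_insert_iff.mpr (Or.inr (pg_adj_iff.mpr ⟨fun he => hwy he.symm, ?_⟩))
      rcases hc with hc | hc
      · exact Or.inl (zpowers_le.mpr hc hyx)
      · refine Or.inr ?_
        rw [← hxy]
        exact hc

lemma twins_of_eq {x y : G} (hxy : zpowers x = zpowers y) :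
    AreTwins (powerGraph G) x y :=
  Or.inr (Set.Subset.antisymm (closed_subset_of_eq hxy) (closed_subset_of_eq hxy.symm))

namespace PsiCtx
variable (C : PsiCtx G)
include C

lemma p_not_dvd_two : ¬ C.p ∣ 2 := by
  intro h
  have := Nat.le_of_dvd (by norm_num) h
  have := C.p3
  omega

lemma no_cmp_2_p {a b : G} (ha : orderOf a = 2) (hb : orderOf b = C.p) :
    ¬ (powerGraph G).Adj a b := by
  intro hadj
  rcases (pg_adj_iff.mp hadj).2 with h | h
  · have := orderOf_dvd_of_mem_zpowers h
    rw [ha, hb] at this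
    exact C.not_two_dvd_p_pow 1 (by rwa [pow_one])
  · have := orderOf_dvd_of_mem_zpowers h
    rw [ha, hb] at this
    exact C.p_not_dvd_two this

lemma twin_one {x : G} (h : AreTwins (powerGraph G) 1 x) : x = 1 := by
  by_contra hx
  rcases h with h | h
  · have hmem : x ∈ (powerGraph G).neighborSet 1 := (pg_adj_one hx).symm
    rw [h] at hmem
    exact (powerGraph G).irrefl hmem
  · have hall : ∀ g : G, g ∈ zpowers x ∨ x ∈ zpowers g := by
      intro g
      by_cases hg : g = x
      · subst hg; exact Or.inl (mem_zpowers g)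
      · have hmem : g ∈ insert (1:G) ((powerGraph G).neighborSet 1) := by
          by_cases hg1 : g = 1
          · exact Set.mem_insert_iff.mpr (Or.inl hg1)
          · exact Set.mem_insert_of_mem _ ((pg_adj_one hg1).symm)
        rw [h] at hmem
        rcases Set.mem_insert_iff.mp hmem with h' | h'
        · exact absurd h' hg
        · have h2 := (pg_adj_iff.mp h').2
          tauto
    obtain ⟨g, hg⟩ := C.not_all_cmp hx
    exact hg (hall g)

lemma twin_z {y x : G} (hy : orderOf y = C.p) (h : AreTwins (powerGraph G) y x) :
    orderOf x = C.p := by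
  have hp3 := C.p3
  have hy1 : y ≠ 1 := by intro h1; rw [h1, orderOf_one] at hy; omega
  by_cases hxy : x = y
  · rw [hxy, hy]
  rcases h with h | h
  · -- open twins
    exfalso
    have hxny : ¬ (powerGraph G).Adj y x := by
      intro hadj
      have hmem : x ∈ (powerGraph G).neighborSet y := hadj
      rw [h] at hmem
      exact (powerGraph G).irrefl hmem
    by_cases hx1 : x = 1
    · subst hx1
      have hmem : y ∈ (powerGraph G).neighborSet 1 := (pg_adj_one hy1).symm
      rw [← h] at hmem
      exact (powerGraph G).irrefl hmem
    have hpx : ¬ C.p ∣ orderOf x := by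
      intro hpdvd
      apply hxny
      apply pg_adj_iff.mpr
      refine ⟨Ne.symm hxy, Or.inl ?_⟩
      have h1 : C.z ∈ zpowers x := C.z_mem hpdvd
      have h2 : zpowers y = zpowers C.z := C.huniq y hy
      have h3 : y ∈ zpowers C.z := by rw [← h2]; exact mem_zpowers y
      exact zpowers_le.mpr h1 h3
    have hx2 : orderOf x = 2 := by
      rcases C.ord_of_not_p_dvd hpx with h1 | h1
      · exact absurd (orderOf_eq_one_iff.mp h1) hx1
      · exact h1
    -- witness y^2
    have hysq_ne : y ^ 2 ≠ y := by
      intro he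
      apply hy1
      have h1 : y * y = y * 1 := by rw [mul_one, ← pow_two, he]
      exact (mul_left_cancel h1)
    have hyy : y ^ 2 ∈ (powerGraph G).neighborSet y := by
      show (powerGraph G).Adj y (y ^ 2)
      exact pg_adj_iff.mpr ⟨fun he => hysq_ne he.symm, Or.inr (pow_mem (mem_zpowers y) 2)⟩
    rw [h] at hyy
    have hord2 : orderOf (y ^ 2) = C.p := by
      have hg : Nat.gcd C.p 2 = 1 := C.p_coprime_two
      rw [orderOf_pow, hy, hg, Nat.div_one]
    exact C.no_cmp_2_p hx2 hord2 hyy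
  · -- closed twins
    have hxmem : x ∈ insert y ((powerGraph G).neighborSet y) := by
      rw [h]; exact Set.mem_insert x _
    rcases Set.mem_insert_iff.mp hxmem with h1 | h1
    · exact absurd h1 hxy
    rcases (pg_adj_iff.mp h1).2 with h2 | h2
    · -- y ∈ zpowers x : p ∣ orderOf x
      have hpdvd : C.p ∣ orderOf x := hy ▸ orderOf_dvd_of_mem_zpowers h2
      by_contra hne
      by_cases h2dvd : (2:ℕ) ∣ orderOf x
      · -- s := x ^ (orderOf x / 2) has order 2
        exfalso
        have hxne2 : orderOf x ≠ 2 := by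
          intro hc; rw [hc] at hpdvd; exact C.p_not_dvd_two hpdvd
        have hsord : orderOf (x ^ (orderOf x / 2)) = 2 := by
          rw [orderOf_pow, Nat.gcd_eq_right (Nat.div_dvd_of_dvd h2dvd),
            Nat.div_div_self h2dvd (orderOf_pos x).ne']
        set s := x ^ (orderOf x / 2) with hs
        have hsnex : s ≠ x := by
          intro he; rw [he] at hsord; exact hxne2 hsord
        have hsadj : (powerGraph G).Adj x s :=
          pg_adj_iff.mpr ⟨Ne.symm hsnex, Or.inr (pow_mem (mem_zpowers x) _)⟩
        have hsmem : s ∈ insert y ((powerGraph G).neighborSet y) := by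
          rw [h]; exact Set.mem_insert_of_mem _ hsadj
        rcases Set.mem_insert_iff.mp hsmem with h3 | h3
        · rw [h3, hy] at hsord; omega
        · exact C.no_cmp_2_p hsord hy h3.symm
      · -- orderOf x = p ^ β, β ≥ 2
        exfalso
        have hp2dvd : C.p ^ 2 ∣ orderOf x := by
          obtain ⟨β, hβ | hβ⟩ := C.ord_shape x
          · have hβ1 : 1 ≤ β := by
              by_contra hc
              push_neg at hc
              interval_cases β
              · rw [pow_zero] at hβ
                rw [hβ] at hpdvd
                have := Nat.le_of_dvd (by norm_num) hpdvd
                omega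
            have hβ2 : 2 ≤ β := by
              rcases Nat.lt_or_ge β 2 with hc | hc
              · interval_cases β
                · rw [pow_one] at hβ; exact absurd hβ hne
              · exact hc
            rw [hβ]
            exact pow_dvd_pow C.p hβ2
          · exfalso
            apply h2dvd
            rw [hβ]
            exact dvd_mul_right 2 _
        obtain ⟨t, ht⟩ := C.exists_invol
        obtain ⟨hh, hhord, hth, hzh⟩ := C.h_of_invol ht
        have hyh : y ∈ zpowers hh := by
          have h2' : zpowers y = zpowers C.z := C.huniq y hy
          have h3 : y ∈ zpowers C.z := by rw [← h2']; exact mem_zpowers y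
          exact zpowers_le.mpr hzh h3
        have hyneh : y ≠ hh := by
          intro he
          rw [he, hhord] at hy
          omega
        have hadjyh : (powerGraph G).Adj y hh := pg_adj_iff.mpr ⟨hyneh, Or.inl hyh⟩
        have hhmem : hh ∈ insert x ((powerGraph G).neighborSet x) := by
          rw [← h]; exact Set.mem_insert_of_mem _ hadjyh
        have h2p_ndvd : ¬ (2:ℕ) ∣ orderOf x := h2dvd
        rcases Set.mem_insert_iff.mp hhmem with h3 | h3
        · -- hh = x
          apply h2p_ndvd
          rw [← h3, hhord]
          exact dvd_mul_right 2 _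
        · rcases (pg_adj_iff.mp h3).2 with h4 | h4
          · -- x ∈ zpowers hh : orderOf x ∣ 2p, with p² ∣ orderOf x
            have hdvd := orderOf_dvd_of_mem_zpowers h4
            rw [hhord] at hdvd
            have hpp : C.p ^ 2 ∣ 2 * C.p := hp2dvd.trans hdvd
            have h5 : C.p ^ 2 ∣ C.p * 2 := by rwa [mul_comm] at hpp
            have h6 : C.p ^ 2 ∣ C.p ^ 1 := by
              rw [pow_one]
              exact (Nat.Coprime.pow_left 2 C.p_coprime_two).dvd_of_dvd_mul_right h5
            have := (Nat.pow_dvd_pow_iff_le_right C.hp.one_lt).mp h6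
            omega
          · -- hh ∈ zpowers x : 2p ∣ orderOf x = odd
            apply h2p_ndvd
            have hdvd := orderOf_dvd_of_mem_zpowers h4
            rw [hhord] at hdvd
            exact (dvd_mul_right 2 C.p).trans hdvd
    · -- x ∈ zpowers y : orderOf x ∣ p
      rcases (Nat.dvd_prime C.hp).mp (hy ▸ orderOf_dvd_of_mem_zpowers h2) with h3 | h3
      · -- x = 1 : contradiction using an involution
        exfalso
        have hx1 : x = 1 := orderOf_eq_one_iff.mp h3
        subst hx1
        obtain ⟨t, ht⟩ := C.exists_invol
        have ht1 : t ≠ 1 := by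
          intro he; rw [he, orderOf_one] at ht; omega
        have htmem : t ∈ insert (1:G) ((powerGraph G).neighborSet 1) :=
          Set.mem_insert_of_mem _ ((pg_adj_one ht1).symm)
        rw [← h] at htmem
        rcases Set.mem_insert_iff.mp htmem with h4 | h4
        · rw [h4, hy] at ht; omega
        · exact C.no_cmp_2_p ht hy h4.symm
      · exact h3

lemma twin_invol {t x : G} (ht : orderOf t = 2) (h : AreTwins (powerGraph G) t x) :
    x = t := by
  have hp3 := C.p3
  have ht1 : t ≠ 1 := by intro he; rw [he, orderOf_one] at ht; omega
  have hz1 : C.z ≠ 1 := C.z_ne_one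
  by_cases hxt : x = t
  · exact hxt
  obtain ⟨hh, hhord, hth, hzh⟩ := C.h_of_invol ht
  have hthh : t ≠ hh := by
    intro he; rw [he, hhord] at ht; omega
  have hzord := C.hz
  rcases h with h | h
  · -- open twins
    exfalso
    have hadj_th : (powerGraph G).Adj t hh := pg_adj_iff.mpr ⟨hthh, Or.inl hth⟩
    have hmem : hh ∈ (powerGraph G).neighborSet x := by rw [← h]; exact hadj_th
    have hadj_xh : (powerGraph G).Adj x hh := hmem
    rcases (pg_adj_iff.mp hadj_xh).2 with h2 | h2
    · -- x ∈ zpowers hh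
      have hdvd := orderOf_dvd_of_mem_zpowers h2
      rw [hhord] at hdvd
      rcases C.ord_dvd_2p hdvd with h3 | h3 | h3 | h3
      · -- x = 1
        have hx1 : x = 1 := orderOf_eq_one_iff.mp h3
        subst hx1
        have hmem2 : C.z ∈ (powerGraph G).neighborSet 1 := (pg_adj_one hz1).symm
        rw [← h] at hmem2
        exact C.no_cmp_2_p ht hzord hmem2
      · -- orderOf x = 2 : x = t by uniqueness
        exact hxt (C.eq_invol h2 hth h3 ht)
      · -- orderOf x = p : use twin_z symmetrically
        have := C.twin_z h3 (PsiAux.twins_symm (Or.inl h))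
        rw [ht] at this
        omega
      · -- orderOf x = 2p
        have hsord : orderOf (x ^ C.p) = 2 := by
          rw [orderOf_pow, h3, Nat.gcd_eq_right (dvd_mul_left C.p 2),
            Nat.mul_div_cancel _ C.hp.pos]
        set s := x ^ C.p with hs
        have hsnex : s ≠ x := by
          intro he; rw [he, h3] at hsord; omega
        have hadj_xs : (powerGraph G).Adj x s :=
          pg_adj_iff.mpr ⟨Ne.symm hsnex, Or.inr (pow_mem (mem_zpowers x) _)⟩
        have hmem3 : s ∈ (powerGraph G).neighborSet t := by rw [h]; exact hadj_xs
        have hadj_ts : (powerGraph G).Adj t s := hmem3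
        have hs1 : s ≠ 1 := by
          intro he; rw [he, orderOf_one] at hsord; omega
        rcases (pg_adj_iff.mp hadj_ts).2 with h4 | h4
        · -- t ∈ zpowers s
          have := C.mem_invol hsord h4 ht1
          exact (pg_adj_iff.mp hadj_ts).1 this
        · -- s ∈ zpowers t
          have := C.mem_invol ht h4 hs1
          exact (pg_adj_iff.mp hadj_ts).1 this.symm
    · -- hh ∈ zpowers x
      have hzx : C.z ∈ zpowers x := zpowers_le.mpr h2 hzh
      have hznex : C.z ≠ x := by
        intro he
        have := orderOf_dvd_of_mem_zpowers h2
        rw [hhord, ← he, hzord] at this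
        have h5 : (2:ℕ) ∣ C.p := (dvd_mul_right 2 C.p).trans this
        exact C.not_two_dvd_p_pow 1 (by rwa [pow_one]) 
      have hadj_xz : (powerGraph G).Adj x C.z :=
        pg_adj_iff.mpr ⟨Ne.symm hznex, Or.inr hzx⟩
      have hmem4 : C.z ∈ (powerGraph G).neighborSet t := by rw [h]; exact hadj_xz
      exact C.no_cmp_2_p ht hzord hmem4
  · -- closed twins
    have hxmem : x ∈ insert t ((powerGraph G).neighborSet t) := by
      rw [h]; exact Set.mem_insert x _
    rcases Set.mem_insert_iff.mp hxmem with h1 | h1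
    · exact h1
    rcases (pg_adj_iff.mp h1).2 with h2 | h2
    · -- t ∈ zpowers x
      by_cases hx2 : orderOf x = 2
      · exact C.eq_invol (mem_zpowers x) h2 hx2 ht
      · exfalso
        have h2dvd : (2:ℕ) ∣ orderOf x := ht ▸ orderOf_dvd_of_mem_zpowers h2
        have hpdvd : C.p ∣ orderOf x := by
          obtain ⟨β, hβ | hβ⟩ := C.ord_shape x
          · exact absurd (hβ ▸ h2dvd) (C.not_two_dvd_p_pow β)
          · have hβ1 : β ≠ 0 := by
              intro he; rw [he, pow_zero, mul_one] at hβ; exact hx2 hβ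
            rw [hβ]
            exact Dvd.dvd.mul_left (dvd_pow_self C.p hβ1) 2
        have hzx : C.z ∈ zpowers x := C.z_mem hpdvd
        have hznex : C.z ≠ x := by
          intro he
          rw [← he, hzord] at h2dvd
          exact C.not_two_dvd_p_pow 1 (by rwa [pow_one])
        have hadj_xz : (powerGraph G).Adj x C.z :=
          pg_adj_iff.mpr ⟨Ne.symm hznex, Or.inr hzx⟩
        have hmem5 : C.z ∈ insert t ((powerGraph G).neighborSet t) := by
          rw [h]; exact Set.mem_insert_of_mem _ hadj_xz
        rcases Set.mem_insert_iff.mp hmem5 with h4 | h4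
        · rw [h4, ht] at hzord; omega
        · exact C.no_cmp_2_p ht hzord h4
    · -- x ∈ zpowers t
      have := C.mem_invol ht h2 ?hx1
      · exact this
      case hx1 =>
        intro hx1
        subst hx1
        exfalso
        have hmem6 : C.z ∈ insert (1:G) ((powerGraph G).neighborSet 1) :=
          Set.mem_insert_of_mem _ ((pg_adj_one hz1).symm)
        rw [← h] at hmem6
        rcases Set.mem_insert_iff.mp hmem6 with h4 | h4
        · rw [h4, ht] at hzord; omega
        · exact C.no_cmp_2_p ht hzord h4

end PsiCtx
end PsiCtxSec3

section PsiCtxSec4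
set_option linter.unusedSectionVars false
set_option linter.unusedVariables false
variable {G : Type*} [Group G] [Fintype G]
namespace PsiCtx
variable (C : PsiCtx G)
include C

lemma good_noncmp {y : G} (hy : y ≠ 1) (hyP : zpowers y ≠ zpowers C.z) :
    ∃ w : G, 3 ≤ orderOf w ∧ w ∉ zpowers y ∧ y ∉ zpowers w := by
  obtain ⟨g, hg⟩ := C.not_all_cmp hy
  push_neg at hg
  have hg1 : g ≠ 1 := by
    intro he; rw [he] at hg; exact hg.1 (one_mem _)
  rcases Nat.lt_or_ge (orderOf g) 3 with hlt | hge
  · have hgo : orderOf g = 2 := by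
      have h1 : orderOf g ≠ 1 := by rw [Ne, orderOf_eq_one_iff]; exact hg1
      have h2 : orderOf g ≠ 0 := (orderOf_pos g).ne'
      omega
    obtain ⟨hh, hhord, hgh, hzh⟩ := C.h_of_invol hgo
    refine ⟨hh, by rw [hhord]; have := C.p3; omega, ?_, ?_⟩
    · intro h1
      exact hg.1 (zpowers_le.mpr h1 hgh)
    · intro h1
      have hdvd := orderOf_dvd_of_mem_zpowers h1
      rw [hhord] at hdvd
      rcases C.ord_dvd_2p hdvd with h3 | h3 | h3 | h3
      · exact hy (orderOf_eq_one_iff.mp h3)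
      · have he := C.eq_invol h1 hgh h3 hgo
        exact hg.2 (by rw [he]; exact mem_zpowers g)
      · exact hyP (C.huniq y h3)
      · have he := C.zpowers_eq_of_mem_of_ord h1 (by rw [h3, hhord])
        rw [← he] at hgh
        exact hg.1 hgh
  · exact ⟨g, hge, hg.1, hg.2⟩

lemma splitter_upgrade {t x y : G} (ht : orderOf t = 2) (htx : t ≠ x) (hty : t ≠ y)
    (hx1 : x ≠ 1) (hy1 : y ≠ 1)
    (hyP : zpowers y ≠ zpowers C.z)
    (hadjx : (powerGraph G).Adj t x) (hnadjy : ¬ (powerGraph G).Adj t y) :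
    ∃ w, 3 ≤ orderOf w ∧ w ≠ x ∧ w ≠ y ∧
      (powerGraph G).Adj w x ∧ ¬ (powerGraph G).Adj w y := by
  have hp3 := C.p3
  have htmem : t ∈ zpowers x := by
    rcases (pg_adj_iff.mp hadjx).2 with h | h
    · exact h
    · exact absurd (C.mem_invol ht h hx1) (fun he => htx he.symm)
  have hty' : t ∉ zpowers y := fun hmem => hnadjy (pg_adj_iff.mpr ⟨hty, Or.inl hmem⟩)
  have hyt' : y ∉ zpowers t := fun hmem => hnadjy (pg_adj_iff.mpr ⟨hty, Or.inr hmem⟩)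
  have h2dvd : (2:ℕ) ∣ orderOf x := ht ▸ orderOf_dvd_of_mem_zpowers htmem
  have hx2 : orderOf x ≠ 2 := by
    intro hc
    exact htx (C.eq_invol htmem (mem_zpowers x) ht hc)
  have hpdvdx : C.p ∣ orderOf x := by
    obtain ⟨β, hβ | hβ⟩ := C.ord_shape x
    · exact absurd (hβ ▸ h2dvd) (C.not_two_dvd_p_pow β)
    · have hβ1 : β ≠ 0 := by
        intro he; rw [he, pow_zero, mul_one] at hβ; exact hx2 hβ
      rw [hβ]
      exact Dvd.dvd.mul_left (dvd_pow_self C.p hβ1) 2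
  by_cases hpy : C.p ∣ orderOf y
  · -- p divides orderOf y
    -- helper : y not in any cyclic group of order 2p containing t, etc.
    have hymem_gen : ∀ u : G, orderOf u = 2 * C.p → t ∈ zpowers u → y ∉ zpowers u := by
      intro u huord htu hyu
      have hdvd := orderOf_dvd_of_mem_zpowers hyu
      rw [huord] at hdvd
      rcases C.ord_dvd_2p hdvd with h3 | h3 | h3 | h3
      · exact hy1 (orderOf_eq_one_iff.mp h3)
      · -- orderOf y = 2 : y = t in zpowers u
        exact hyt' ((C.eq_invol hyu htu h3 ht) ▸ mem_zpowers t)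
      · exact hyP (C.huniq y h3)
      · -- orderOf y = 2p : zpowers y = zpowers u ∋ t
        have he := C.zpowers_eq_of_mem_of_ord hyu (by rw [h3, huord])
        rw [← he] at htu
        exact hty' htu
    by_cases hx2p : orderOf x = 2 * C.p
    · -- w := x⁻¹
      have hinvmem : x⁻¹ ∈ zpowers x := inv_mem (mem_zpowers x)
      have hyx : y ∉ zpowers x := hymem_gen x hx2p htmem
      have hxy' : x ∉ zpowers y := fun hmem => hty' (zpowers_le.mpr hmem htmem)
      have hxinv_ne : x⁻¹ ≠ x := by
        intro he
        have hsq : x ^ 2 = 1 := by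
          rw [pow_two]
          nth_rewrite 1 [← he]
          exact inv_mul_cancel x
        have h5 := orderOf_dvd_of_pow_eq_one hsq
        rw [hx2p] at h5
        have := Nat.le_of_dvd (by norm_num) h5
        omega
      refine ⟨x⁻¹, ?_, hxinv_ne, ?_, ?_, ?_⟩
      · rw [orderOf_inv, hx2p]; omega
      · intro he
        rw [← he] at hyx
        exact hyx hinvmem
      · exact pg_adj_iff.mpr ⟨hxinv_ne, Or.inl hinvmem⟩
      · intro hadj
        rcases (pg_adj_iff.mp hadj).2 with h | h
        · exact hxy' (by rwa [inv_mem_iff] at h)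
        · exact hyx (zpowers_le.mpr hinvmem h)
    · -- w := x ^ (orderOf x / (2p))
      have h2pdvd : 2 * C.p ∣ orderOf x := by
        obtain ⟨β, hβ | hβ⟩ := C.ord_shape x
        · exact absurd (hβ ▸ h2dvd) (C.not_two_dvd_p_pow β)
        · have hβ1 : β ≠ 0 := by
            intro he; rw [he, pow_zero, mul_one] at hβ; exact hx2 hβ
          rw [hβ]
          exact mul_dvd_mul_left 2 (dvd_pow_self C.p hβ1)
      set u := x ^ (orderOf x / (2 * C.p)) with hu
      have huord : orderOf u = 2 * C.p := by
        rw [hu, orderOf_pow, Nat.gcd_eq_right (Nat.div_dvd_of_dvd h2pdvd),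
          Nat.div_div_self h2pdvd (orderOf_pos x).ne']
      have humem : u ∈ zpowers x := pow_mem (mem_zpowers x) _
      have hune : u ≠ x := by
        intro he; rw [he] at huord; exact hx2p huord
      have hsord : orderOf (u ^ C.p) = 2 := by
        rw [orderOf_pow, huord, Nat.gcd_eq_right (dvd_mul_left C.p 2),
          Nat.mul_div_cancel _ C.hp.pos]
      have htu : t ∈ zpowers u := by
        have he : t = u ^ C.p :=
          C.eq_invol htmem (pow_mem humem C.p) ht hsord
        rw [he]
        exact pow_mem (mem_zpowers u) _
      have hyu : y ∉ zpowers u := hymem_gen u huord htu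
      have huy : u ∉ zpowers y := fun hmem => hty' (zpowers_le.mpr hmem htu)
      refine ⟨u, by rw [huord]; omega, hune, ?_, ?_, ?_⟩
      · intro he
        rw [← he] at hyu
        exact hyu (mem_zpowers u)
      · exact pg_adj_iff.mpr ⟨hune, Or.inl humem⟩
      · intro hadj
        rcases (pg_adj_iff.mp hadj).2 with h | h
        · exact huy h
        · exact hyu h
  · -- p does not divide orderOf y : use z
    have hzx : C.z ∈ zpowers x := C.z_mem hpdvdx
    refine ⟨C.z, by rw [C.hz]; omega, ?_, ?_, ?_, ?_⟩
    · intro he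
      rw [← he, C.hz] at h2dvd
      exact C.not_two_dvd_p_pow 1 (by rwa [pow_one])
    · intro he
      apply hpy
      rw [← he, C.hz]
    · refine pg_adj_iff.mpr ⟨?_, Or.inl hzx⟩
      intro he
      rw [← he, C.hz] at h2dvd
      exact C.not_two_dvd_p_pow 1 (by rwa [pow_one])
    · intro hadj
      rcases (pg_adj_iff.mp hadj).2 with h | h
      · exact hpy (C.hz ▸ orderOf_dvd_of_mem_zpowers h)
      · have := orderOf_dvd_of_mem_zpowers h
        rw [C.hz] at this
        rcases (Nat.dvd_prime C.hp).mp this with h3 | h3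
        · exact hy1 (orderOf_eq_one_iff.mp h3)
        · exact hpy (by rw [h3])

lemma core_splitter {x y : G} (hne : x ≠ y) (hnt : ¬ AreTwins (powerGraph G) x y)
    (hxP : zpowers x ≠ zpowers C.z) (hyP : zpowers y ≠ zpowers C.z) :
    ∃ w, 3 ≤ orderOf w ∧ w ≠ x ∧ w ≠ y ∧
      (((powerGraph G).Adj w x ∧ ¬ (powerGraph G).Adj w y) ∨
        ((powerGraph G).Adj w y ∧ ¬ (powerGraph G).Adj w x)) := by
  by_cases hx1 : x = 1
  · subst hx1
    have hy1 : y ≠ 1 := Ne.symm hne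
    obtain ⟨w, hw3, hw1, hw2⟩ := C.good_noncmp hy1 hyP
    have hwne1 : w ≠ 1 := by
      intro he; rw [he, orderOf_one] at hw3; omega
    refine ⟨w, hw3, hwne1, ?_, Or.inl ⟨pg_adj_one hwne1, ?_⟩⟩
    · intro he; rw [he] at hw1; exact hw1 (mem_zpowers y)
    · intro hadj
      rcases (pg_adj_iff.mp hadj).2 with h | h
      · exact hw1 h
      · exact hw2 h
  by_cases hy1 : y = 1
  · subst hy1
    obtain ⟨w, hw3, hw1, hw2⟩ := C.good_noncmp hx1 hxP
    have hwne1 : w ≠ 1 := by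
      intro he; rw [he, orderOf_one] at hw3; omega
    refine ⟨w, hw3, ?_, hwne1, Or.inr ⟨pg_adj_one hwne1, ?_⟩⟩
    · intro he; rw [he] at hw1; exact hw1 (mem_zpowers x)
    · intro hadj
      rcases (pg_adj_iff.mp hadj).2 with h | h
      · exact hw1 h
      · exact hw2 h
  obtain ⟨w₀, hwx, hwy, hiff⟩ := PsiAux.exists_splitter hne hnt
  rcases Nat.lt_or_ge (orderOf w₀) 3 with hlt | hge
  · -- orderOf w₀ ∈ {1,2}
    have hw0pos : orderOf w₀ ≠ 0 := (orderOf_pos w₀).ne'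
    by_cases hw01 : w₀ = 1
    · exfalso
      apply hiff
      subst hw01
      exact ⟨fun _ => (pg_adj_one hy1).symm, fun _ => (pg_adj_one hx1).symm⟩
    have hw02 : orderOf w₀ = 2 := by
      have h1 : orderOf w₀ ≠ 1 := by rw [Ne, orderOf_eq_one_iff]; exact hw01
      omega
    by_cases hax : (powerGraph G).Adj w₀ x
    · have hay : ¬ (powerGraph G).Adj w₀ y := fun h => hiff ⟨fun _ => h, fun _ => hax⟩
      obtain ⟨w, h3, hwx', hwy', hadj, hnadj⟩ :=
        C.splitter_upgrade hw02 hwx hwy hx1 hy1 hyP hax hay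
      exact ⟨w, h3, hwx', hwy', Or.inl ⟨hadj, hnadj⟩⟩
    · have hay : (powerGraph G).Adj w₀ y := by
        by_contra hay
        exact hiff ⟨fun h => absurd h hax, fun h => absurd h hay⟩
      obtain ⟨w, h3, hwy', hwx', hadj, hnadj⟩ :=
        C.splitter_upgrade hw02 hwy hwx hy1 hx1 hxP hay hax
      exact ⟨w, h3, hwx', hwy', Or.inr ⟨hadj, hnadj⟩⟩
  · by_cases hax : (powerGraph G).Adj w₀ x
    · have hay : ¬ (powerGraph G).Adj w₀ y := fun h => hiff ⟨fun _ => h, fun _ => hax⟩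
      exact ⟨w₀, hge, hwx, hwy, Or.inl ⟨hax, hay⟩⟩
    · have hay : (powerGraph G).Adj w₀ y := by
        by_contra hay
        exact hiff ⟨fun h => absurd h hax, fun h => absurd h hay⟩
      exact ⟨w₀, hge, hwx, hwy, Or.inr ⟨hay, hax⟩⟩

end PsiCtx
end PsiCtxSec4

section Assembly
set_option linter.unusedSectionVars false
set_option linter.unusedVariables false
open Classical in
noncomputable def classRep {V : Type*} [Inhabited V] (Γ : SimpleGraph V) (S : Set V) : V :=
  if h : ∃ u, S = twinClass Γ u then h.choose else default

variable {V : Type*} [Fintype V]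

lemma Uset_finite (Γ : SimpleGraph V) :
    {S : Set V | ∃ u, S = twinClass Γ u}.Finite := by
  have h : {S : Set V | ∃ u, S = twinClass Γ u} = Set.range (twinClass Γ) := by
    ext S
    simp only [Set.mem_setOf_eq, Set.mem_range, eq_comm]
  rw [h]
  exact Set.finite_range _

lemma classRep_spec {V : Type*} [Inhabited V] (Γ : SimpleGraph V) {S : Set V}
    (hS : ∃ u, S = twinClass Γ u) : S = twinClass Γ (classRep Γ S) := by
  rw [classRep, dif_pos hS]
  exact hS.choose_spec

variable {G : Type*} [Group G] [Fintype G]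

instance : Inhabited G := ⟨1⟩

lemma Uset_injOn (Γ : SimpleGraph G) :
    Set.InjOn (classRep Γ) {S : Set G | ∃ u, S = twinClass Γ u} := by
  intro S hS S' hS' he
  rw [classRep_spec Γ hS, classRep_spec Γ hS', he]

lemma Uset_card_le (Γ : SimpleGraph G) :
    twinClassCount Γ ≤ Fintype.card G := by
  have h1 := Set.ncard_le_ncard_of_injOn (classRep Γ)
    (fun S _ => Set.mem_univ (classRep Γ S)) (Uset_injOn Γ) (Set.finite_univ)
  rwa [Set.ncard_univ, Nat.card_eq_fintype_card] at h1

lemma Uset_card_pos (Γ : SimpleGraph G) : 1 ≤ twinClassCount Γ := by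
  rw [twinClassCount]
  rw [Nat.one_le_iff_ne_zero, Ne, Set.ncard_eq_zero (Uset_finite Γ)]
  intro h
  have : twinClass Γ 1 ∈ {S : Set G | ∃ u, S = twinClass Γ u} := ⟨1, rfl⟩
  rw [h] at this
  exact this

namespace PsiCtx
variable (C : PsiCtx G)
include C

lemma lower_bound {W : Set G} (hres : IsResolvingSet (powerGraph G) W) :
    Fintype.card G - twinClassCount (powerGraph G) + 1 ≤ W.ncard := by
  set Γ := powerGraph G with hΓ
  set n := Fintype.card G with hn
  set U := twinClassCount Γ with hU
  have hUn : U ≤ n := Uset_card_le Γ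
  have hinj : Set.InjOn (twinClass Γ) Wᶜ := by
    intro a ha b hb hab
    by_contra hne
    have htw : AreTwins Γ a b := by
      have hb' : b ∈ twinClass Γ b := PsiAux.mem_twinClass_self Γ b
      rw [← hab] at hb'
      exact hb'
    obtain ⟨w, hwW, hd⟩ := hres a b hne
    have hwa : w ≠ a := fun he => ha (he ▸ hwW)
    have hwb : w ≠ b := fun he => hb (he ▸ hwW)
    exact hd (PsiAux.pg_dist_eq_of_twins htw hwa hwb)
  have himg : (twinClass Γ) '' Wᶜ ⊆ {S : Set G | ∃ u, S = twinClass Γ u} := by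
    rintro S ⟨a, _, rfl⟩
    exact ⟨a, rfl⟩
  have h1 : Wᶜ.ncard ≤ U := by
    calc Wᶜ.ncard = ((twinClass Γ) '' Wᶜ).ncard := (Set.ncard_image_of_injOn hinj).symm
      _ ≤ U := Set.ncard_le_ncard himg (Uset_finite Γ)
  have hcompl : W.ncard + Wᶜ.ncard = n := by
    rw [Set.ncard_add_ncard_compl, Nat.card_eq_fintype_card]
  by_contra hcon
  push_neg at hcon
  have hWc_eq : Wᶜ.ncard = U := by omega
  have himg_eq : (twinClass Γ) '' Wᶜ = {S : Set G | ∃ u, S = twinClass Γ u} := by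
    apply Set.eq_of_subset_of_ncard_le himg ?_ (Uset_finite Γ)
    rw [Set.ncard_image_of_injOn hinj, hWc_eq]
    exact le_rfl
  have hsurj : ∀ u : G, ∃ a, a ∈ Wᶜ ∧ twinClass Γ a = twinClass Γ u := by
    intro u
    have hmem : twinClass Γ u ∈ {S : Set G | ∃ v, S = twinClass Γ v} := ⟨u, rfl⟩
    rw [← himg_eq] at hmem
    obtain ⟨a, haW, hae⟩ := hmem
    exact ⟨a, haW, hae⟩
  have htwins_of : ∀ u a : G, twinClass Γ a = twinClass Γ u → AreTwins Γ u a := by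
    intro u a h
    have : a ∈ twinClass Γ u := by
      rw [← h]; exact PsiAux.mem_twinClass_self Γ a
    exact this
  -- 1 is not in W
  obtain ⟨a1, ha1W, ha1⟩ := hsurj 1
  have ha1e : a1 = 1 := C.twin_one (htwins_of 1 a1 ha1)
  have h1W : (1:G) ∈ Wᶜ := ha1e ▸ ha1W
  -- a generator of P is not in W
  obtain ⟨z', hz'W, hz'⟩ := hsurj C.z
  have hz'p : orderOf z' = C.p := C.twin_z C.hz (htwins_of C.z z' hz')
  have h1z : (1:G) ≠ z' := by
    intro he
    rw [← he, orderOf_one] at hz'p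
    have := C.p3
    omega
  obtain ⟨w, hwW, hd⟩ := hres 1 z' h1z
  apply hd
  have hw1 : w ≠ 1 := fun he => h1W (he ▸ hwW)
  have hwz' : w ≠ z' := fun he => hz'W (he ▸ hwW)
  have hw2 : orderOf w ≠ 2 := by
    intro hw2
    obtain ⟨aw, hawW, haw⟩ := hsurj w
    have : aw = w := C.twin_invol hw2 (htwins_of w aw haw)
    exact hawW (this ▸ hwW)
  have hpw : C.p ∣ orderOf w := by
    by_contra hpw
    rcases C.ord_of_not_p_dvd hpw with h | h
    · exact hw1 (orderOf_eq_one_iff.mp h)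
    · exact hw2 h
  have hz'w : z' ∈ zpowers w := by
    have h2 : zpowers z' = zpowers C.z := C.huniq z' hz'p
    have h3 : z' ∈ zpowers C.z := by rw [← h2]; exact mem_zpowers z'
    exact zpowers_le.mpr (C.z_mem hpw) h3
  have hd1 : Γ.dist 1 w = 1 := PsiAux.pg_dist_eq_one (pg_adj_one hw1).symm
  have hd2 : Γ.dist z' w = 1 :=
    PsiAux.pg_dist_eq_one (pg_adj_iff.mpr ⟨hwz'.symm, Or.inl hz'w⟩)
  rw [hd1, hd2]

lemma upper_bound :
    ∃ W : Set G, W.Finite ∧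
      W.ncard = Fintype.card G - twinClassCount (powerGraph G) + 1 ∧
      IsResolvingSet (powerGraph G) W := by
  set Γ := powerGraph G with hΓ
  set n := Fintype.card G with hn
  set Uset := {S : Set G | ∃ u, S = twinClass Γ u} with hUset
  set U := twinClassCount Γ with hU
  have hUcard : Uset.ncard = U := rfl
  have hUn : U ≤ n := Uset_card_le Γ
  have hU1 : 1 ≤ U := Uset_card_pos Γ
  have hfin : Uset.Finite := Uset_finite Γ
  set f := classRep Γ with hf
  have hspec : ∀ S ∈ Uset, S = twinClass Γ (f S) := fun S hS => classRep_spec Γ hS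
  have hzC : twinClass Γ C.z ∈ Uset := ⟨C.z, rfl⟩
  set S' := (f '' Uset) \ {f (twinClass Γ C.z)} with hS'
  have hficard : (f '' Uset).ncard = U := Set.ncard_image_of_injOn (Uset_injOn Γ)
  have hfzC : f (twinClass Γ C.z) ∈ f '' Uset := ⟨_, hzC, rfl⟩
  have hS'card : S'.ncard = U - 1 := by
    rw [hS', Set.ncard_diff_singleton_of_mem hfzC, hficard]
  have hWcard : (S'ᶜ).ncard = n - U + 1 := by
    have h1 : S'.ncard + S'ᶜ.ncard = n := by
      rw [Set.ncard_add_ncard_compl, Nat.card_eq_fintype_card]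
    omega
  -- key fact: members of S' are canonical representatives
  have hrep : ∀ u ∈ S', u = f (twinClass Γ u) := by
    intro u hu
    obtain ⟨⟨Su, hSu, hfSu⟩, _⟩ := hu
    have h1 : Su = twinClass Γ u := by
      rw [hspec Su hSu, hfSu]
    rw [← h1, hfSu]
  have hnotzcls : ∀ u ∈ S', zpowers u ≠ zpowers C.z := by
    intro u hu hzeq
    have htw : AreTwins Γ u C.z := twins_of_eq hzeq
    have h1 : twinClass Γ u = twinClass Γ C.z := PsiAux.twinClass_eq htw
    apply hu.2
    rw [Set.mem_singleton_iff, hrep u hu, h1]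
  refine ⟨S'ᶜ, Set.toFinite _, hWcard, ?_⟩
  intro u v hne
  by_cases hu : u ∈ S'ᶜ
  · refine ⟨u, hu, ?_⟩
    rw [SimpleGraph.dist_self]
    exact fun h => PsiAux.pg_dist_ne_zero (Ne.symm hne) h.symm
  by_cases hv : v ∈ S'ᶜ
  · refine ⟨v, hv, ?_⟩
    rw [SimpleGraph.dist_self]
    exact PsiAux.pg_dist_ne_zero hne
  -- both in S'
  have huS : u ∈ S' := by rwa [Set.notMem_compl_iff] at hu
  have hvS : v ∈ S' := by rwa [Set.notMem_compl_iff] at hv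
  have hclsne : twinClass Γ u ≠ twinClass Γ v := by
    intro h
    apply hne
    rw [hrep u huS, h, ← hrep v hvS]
  have hnt : ¬ AreTwins Γ u v := fun h => hclsne (PsiAux.twinClass_eq h)
  obtain ⟨w₀, hw₀3, hw₀u, hw₀v, hsplit⟩ :=
    C.core_splitter hne hnt (hnotzcls u huS) (hnotzcls v hvS)
  by_cases hw₀W : w₀ ∈ S'ᶜ
  · refine ⟨w₀, hw₀W, ?_⟩
    rcases hsplit with ⟨ha, hn'⟩ | ⟨ha, hn'⟩
    · exact PsiAux.pg_dist_ne hw₀u hw₀v ha hn'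
    · exact (PsiAux.pg_dist_ne hw₀v hw₀u ha hn').symm
  · have hw₀S : w₀ ∈ S' := by rwa [Set.notMem_compl_iff] at hw₀W
    set w₁ := w₀⁻¹ with hw₁def
    have hzp_eq : zpowers w₀ = zpowers w₁ := by
      apply le_antisymm
      · apply zpowers_le.mpr
        have h0 := inv_mem (mem_zpowers w₀⁻¹)
        rwa [inv_inv] at h0
      · exact zpowers_le.mpr (inv_mem (mem_zpowers w₀))
    have htw01 : AreTwins Γ w₀ w₁ := twins_of_eq hzp_eq
    have hcls01 : twinClass Γ w₀ = twinClass Γ w₁ := PsiAux.twinClass_eq htw01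
    have hw₁ne : w₁ ≠ w₀ := by
      intro he
      have hsq : w₀ ^ 2 = 1 := by
        rw [pow_two]
        nth_rewrite 1 [← he]
        exact inv_mul_cancel w₀
      have h5 := orderOf_dvd_of_pow_eq_one hsq
      have := Nat.le_of_dvd (by norm_num) h5
      omega
    have hw₁W : w₁ ∈ S'ᶜ := by
      rw [Set.mem_compl_iff]
      intro hw₁S
      apply hw₁ne
      rw [hrep w₁ hw₁S, ← hcls01, ← hrep w₀ hw₀S]
    have hw₁u : w₁ ≠ u := by
      intro he
      apply hw₀u
      have h1 : twinClass Γ u = twinClass Γ w₀ := by rw [← he]; exact hcls01.symm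
      have h2 : u = f (twinClass Γ u) := hrep u huS
      rw [h1, ← hrep w₀ hw₀S] at h2
      exact h2.symm
    have hw₁v : w₁ ≠ v := by
      intro he
      apply hw₀v
      have h1 : twinClass Γ v = twinClass Γ w₀ := by rw [← he]; exact hcls01.symm
      have h2 : v = f (twinClass Γ v) := hrep v hvS
      rw [h1, ← hrep w₀ hw₀S] at h2
      exact h2.symm
    have hiffu : Γ.Adj w₀ u ↔ Γ.Adj w₁ u :=
      PsiAux.twins_adj_iff htw01 (Ne.symm hw₀u) (fun he => hw₁u he.symm)
    have hiffv : Γ.Adj w₀ v ↔ Γ.Adj w₁ v :=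
      PsiAux.twins_adj_iff htw01 (Ne.symm hw₀v) (fun he => hw₁v he.symm)
    refine ⟨w₁, hw₁W, ?_⟩
    rcases hsplit with ⟨ha, hn'⟩ | ⟨ha, hn'⟩
    · exact PsiAux.pg_dist_ne hw₁u hw₁v (hiffu.mp ha) (fun h => hn' (hiffv.mpr h))
    · exact (PsiAux.pg_dist_ne hw₁v hw₁u (hiffv.mp ha) (fun h => hn' (hiffu.mpr h))).symm

end PsiCtx
end Assembly

section Final
variable {G : Type*} [Group G] [Fintype G]

lemma exists_psiCtx (h : InPsi G) : Nonempty (PsiCtx G) := by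
  obtain ⟨hnc, p, hp, hodd, hdvd, hexu, hno4, hinv⟩ := h
  haveI : Fact p.Prime := ⟨hp⟩
  obtain ⟨z, hz⟩ := exists_prime_orderOf_dvd_card p ((hdvd p hp).mpr (Or.inr rfl))
  obtain ⟨P, hP, hPuniq⟩ := hexu
  refine ⟨⟨p, hp, hodd, hnc, hdvd, z, hz, ?_, hno4, hinv⟩⟩
  intro g hg
  have h1 : zpowers g = P :=
    hPuniq (zpowers g) (show Nat.card (zpowers g) = p by rw [Nat.card_zpowers, hg])
  have h2 : zpowers z = P :=
    hPuniq (zpowers z) (show Nat.card (zpowers z) = p by rw [Nat.card_zpowers, hz])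
  rw [h1, h2]

end Final

end PsiAux

/-- If `G ∈ Ψ`, then `β(P_G) = |G| - |U(P_G)| + 1`. -/
theorem metricDim_powerGraph_of_inPsi
    (G : Type*) [Group G] [Fintype G] (hG : InPsi G) :
    metricDim (powerGraph G)
      = Fintype.card G - twinClassCount (powerGraph G) + 1 := by
  obtain ⟨C⟩ := PsiAux.exists_psiCtx hG
  obtain ⟨W, hWfin, hWcard, hWres⟩ := C.upper_bound
  have hmem : (Fintype.card G - twinClassCount (powerGraph G) + 1) ∈
      {n | ∃ W : Set G, W.Finite ∧ W.ncard = n ∧ IsResolvingSet (powerGraph G) W} :=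
    ⟨W, hWfin, hWcard, hWres⟩
  unfold metricDim
  apply le_antisymm
  · exact Nat.sInf_le hmem
  · refine le_csInf ⟨_, hmem⟩ ?_
    rintro k ⟨W', hfin', hcard', hres'⟩
    rw [← hcard']
    exact C.lower_bound hres'
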